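/- arXiv:math/0403266 — 10 statements merged into one kernel-verified Lean document; each statement's English description precedes it below -/
import Mathlib

section
/- Suppose b, δ, h, i, p are endomorphisms/maps with i ∘ p = 1 + b∘h + h∘b, b² = 0, and (b + δ)² = 0, and (1 - δ∘h) is invertible with A = (1 - δ∘h)⁻¹ ∘ δ. Then A ∘ i ∘ p ∘ A + A ∘ b + b ∘ A = 0. -/
/-- With `i ∘ p = 1 + b∘h + h∘b`, `b² = 0`, `(b+δ)² = 0` and `(1 - δ∘h)` invertible,
`A = (1 - δ∘h)⁻¹ ∘ δ` satisfies `A ∘ i ∘ p ∘ A + A ∘ b + b ∘ A = 0`. -/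
theorem perturbation_AipA {R L M : Type*} [CommRing R] [AddCommGroup L] [Module R L]
    [AddCommGroup M] [Module R M]
    (b h δ : Module.End R M) (bL : Module.End R L)
    (i : L →ₗ[R] M) (p : M →ₗ[R] L)
    (hb : b * b = 0)
    (hip : (i ∘ₗ p : Module.End R M) = 1 + b * h + h * b)
    (hi : i ∘ₗ bL = b ∘ₗ i) (hp : bL ∘ₗ p = p ∘ₗ b)
    (hδ : (b + δ) * (b + δ) = 0)
    (u : (Module.End R M)ˣ) (hu : (u : Module.End R M) = 1 - δ * h)
    (A : Module.End R M) (hA : A = (↑u⁻¹ : Module.End R M) * δ) :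
    A * (i ∘ₗ p : Module.End R M) * A + A * b + b * A = 0 := by
  -- δ² + δb + bδ = (b+δ)² - b² = 0
  have hz : δ * δ + δ * b + b * δ = 0 := by
    have : δ * δ + δ * b + b * δ = (b + δ) * (b + δ) - b * b := by noncomm_ring
    rw [this, hδ, hb, sub_zero]
  -- uA = δ, hence A = δ + δ h A
  have huA : (u : Module.End R M) * A = δ := by
    rw [hA, ← mul_assoc, Units.mul_inv, one_mul]
  have f2 : δ * (1 + h * A) = A := by
    have : A - δ * (h * A) = δ := by
      have := huA
      rw [hu] at this
      calc A - δ * (h * A) = (1 - δ * h) * A := by noncomm_ring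
        _ = δ := this
    calc δ * (1 + h * A) = (A - δ * (h * A)) * (1 + h * A) := by rw [this]
      _ = A + (A - δ * (h * A)) * (h * A) - δ * (h * A) := by noncomm_ring
      _ = A + δ * (h * A) - δ * (h * A) := by rw [this]
      _ = A := by abel
  have f3 : (1 + A * h) * δ = A := by
    have key : (u : Module.End R M) * δ = δ * (1 - h * δ) := by
      rw [hu]; noncomm_ring
    calc (1 + A * h) * δ = δ + (↑u⁻¹ : Module.End R M) * (δ * (h * δ)) := by
          rw [hA]; noncomm_ring
      _ = δ + (↑u⁻¹ : Module.End R M) * (δ - (u : Module.End R M) * δ) := by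
          rw [key]; noncomm_ring
      _ = δ + (↑u⁻¹ : Module.End R M) * δ - δ := by
          rw [mul_sub, ← mul_assoc, Units.inv_mul, one_mul]; abel
      _ = A := by rw [hA]; abel
  rw [hip]
  have main : A * (1 + b * h + h * b) * A + A * b + b * A
      = (1 + A * h) * (δ * δ + δ * b + b * δ) * (1 + h * A) := by
    calc A * (1 + b * h + h * b) * A + A * b + b * A
        = (((1 + A * h) * δ) * (δ * (1 + h * A)) + ((1 + A * h) * δ) * (b * (1 + h * A)))
          + ((1 + A * h) * b) * (δ * (1 + h * A)) := by
          rw [f2, f3]; noncomm_ring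
      _ = (1 + A * h) * (δ * δ + δ * b + b * δ) * (1 + h * A) := by noncomm_ring
  rw [main, hz, mul_zero, zero_mul]
end

section
/- Under the hypotheses of a homotopy equivalence data with a small perturbation δ, the perturbed differential b₁ = b_L + p ∘ A ∘ i on L satisfies b₁ ∘ b₁ = 0. -/
/-- Main perturbation lemma: the perturbed differential `b₁ = b_L + p ∘ A ∘ i`
on `L` satisfies `b₁ ∘ b₁ = 0`. -/
theorem perturbed_differential_squares_to_zero {R L M : Type*} [CommRing R]
    [AddCommGroup L] [Module R L] [AddCommGroup M] [Module R M]
    (b h δ : Module.End R M) (bL : Module.End R L)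
    (i : L →ₗ[R] M) (p : M →ₗ[R] L)
    (hbL : bL * bL = 0) (hb : b * b = 0)
    (hip : (i ∘ₗ p : Module.End R M) = 1 + b * h + h * b)
    (hi : i ∘ₗ bL = b ∘ₗ i) (hp : bL ∘ₗ p = p ∘ₗ b)
    (hδ : (b + δ) * (b + δ) = 0)
    (u : (Module.End R M)ˣ) (hu : (u : Module.End R M) = 1 - δ * h)
    (A : Module.End R M) (hA : A = (↑u⁻¹ : Module.End R M) * δ)
    (b₁ : Module.End R L) (hb₁ : b₁ = bL + p ∘ₗ A ∘ₗ i) :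
    b₁ * b₁ = 0 := by
  -- (1 - δh) A = δ
  have huA : (1 - δ * h) * A = δ := by
    rw [hA, ← hu, ← mul_assoc, Units.mul_inv, one_mul]
  -- A (1 - hδ) = δ
  have hAu : A * (1 - h * δ) = δ := by
    have e : δ * (1 - h * δ) = (1 - δ * h) * δ := by noncomm_ring
    rw [hA, mul_assoc, e, ← hu, ← mul_assoc, Units.inv_mul, one_mul]
  have f2 : δ * h * A = A - δ := by
    have h1 : A - δ * h * A = δ := by
      have h0 := huA; rw [sub_mul, one_mul] at h0; exact h0
    have h2 : δ * h * A + (A - δ * h * A) = A := by abel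
    rw [h1] at h2
    exact eq_sub_of_add_eq h2
  have f1 : A * h * δ = A - δ := by
    have h1 : A - A * h * δ = δ := by
      have h0 := hAu; rw [mul_sub, mul_one, ← mul_assoc] at h0; exact h0
    have h2 : A * h * δ + (A - A * h * δ) = A := by abel
    rw [h1] at h2
    exact eq_sub_of_add_eq h2
  have f1' : (1 + A * h) * δ = A := by rw [add_mul, one_mul, f1]; abel
  have f2' : δ * (1 + h * A) = A := by rw [mul_add, mul_one, ← mul_assoc, f2]; abel
  have S0 : b * δ + δ * b + δ * δ = 0 := by
    have e : (b + δ) * (b + δ) = b * b + (b * δ + δ * b + δ * δ) := by noncomm_ring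
    rw [e, hb, zero_add] at hδ
    exact hδ
  have key0 : b * A + A * b + A * A + A * b * h * A + A * h * b * A = 0 := by
    have expand : (1 + A * h) * (b * δ + δ * b + δ * δ) * (1 + h * A)
        = (1 + A * h) * b * (δ * (1 + h * A)) + ((1 + A * h) * δ) * (b * (1 + h * A))
          + ((1 + A * h) * δ) * (δ * (1 + h * A)) := by noncomm_ring
    rw [f1', f2'] at expand
    have e2 : (1 + A * h) * b * A + A * (b * (1 + h * A)) + A * A
        = b * A + A * b + A * A + A * b * h * A + A * h * b * A := by noncomm_ring
    have z : (1 + A * h) * (b * δ + δ * b + δ * δ) * (1 + h * A) = 0 := by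
      rw [S0, mul_zero, zero_mul]
    exact e2.symm.trans (expand.symm.trans z)
  -- pointwise versions
  have hiP : ∀ l, i (bL l) = b (i l) := fun l => LinearMap.congr_fun hi l
  have hpP : ∀ m, bL (p m) = p (b m) := fun m => LinearMap.congr_fun hp m
  have hbLP : ∀ l, bL (bL l) = 0 := fun l => LinearMap.congr_fun hbL l
  have hipP : ∀ m, i (p m) = m + b (h m) + h (b m) := by
    intro m
    have := LinearMap.congr_fun hip m
    simpa [Module.End.mul_apply] using this
  have keyP : ∀ m, b (A m) + A (b m) + A (A m) + A (b (h (A m))) + A (h (b (A m))) = 0 := by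
    intro m
    have := LinearMap.congr_fun key0 m
    simpa [Module.End.mul_apply] using this
  rw [hb₁]
  ext x
  simp only [Module.End.mul_apply, LinearMap.add_apply, LinearMap.comp_apply, LinearMap.zero_apply,
    map_add]
  rw [hbLP, hpP, hiP, hipP]
  have T : p (b (A (i x)) + A (b (i x)) + A (A (i x)) + A (b (h (A (i x)))) + A (h (b (A (i x))))) = 0 := by
    rw [keyP (i x), map_zero]
  simp only [map_add] at T ⊢
  abel_nf at T ⊢
  exact T
end

section
/- Under the hypotheses of a homotopy equivalence data with a small perturbation δ, the map i₁ = i + h ∘ A ∘ i is a chain map from (L, b₁) to (M, b + δ), i.e. i₁ ∘ b₁ = (b + δ) ∘ i₁. -/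
/-- Main perturbation lemma: `i₁ = i + h ∘ A ∘ i` is a chain map from `(L, b₁)`
to `(M, b + δ)`, i.e. `i₁ ∘ b₁ = (b + δ) ∘ i₁`. -/
theorem perturbed_i_is_chain_map {R L M : Type*} [CommRing R]
    [AddCommGroup L] [Module R L] [AddCommGroup M] [Module R M]
    (b h δ : Module.End R M) (bL : Module.End R L)
    (i : L →ₗ[R] M) (p : M →ₗ[R] L)
    (hbL : bL * bL = 0) (hb : b * b = 0)
    (hip : (i ∘ₗ p : Module.End R M) = 1 + b * h + h * b)
    (hi : i ∘ₗ bL = b ∘ₗ i) (hp : bL ∘ₗ p = p ∘ₗ b)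
    (hδ : (b + δ) * (b + δ) = 0)
    (u : (Module.End R M)ˣ) (hu : (u : Module.End R M) = 1 - δ * h)
    (A : Module.End R M) (hA : A = (↑u⁻¹ : Module.End R M) * δ)
    (b₁ : Module.End R L) (hb₁ : b₁ = bL + p ∘ₗ A ∘ₗ i)
    (i₁ : L →ₗ[R] M) (hi₁ : i₁ = i + h ∘ₗ A ∘ₗ i) :
    i₁ ∘ₗ b₁ = (b + δ) ∘ₗ i₁ := by
  -- basic identities
  have hδb : b * δ + δ * b + δ * δ = 0 := by
    have hd := hδ
    rw [add_mul, mul_add, mul_add, hb, zero_add, ← add_assoc] at hd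
    exact hd
  have huA : (u : Module.End R M) * A = δ := by
    rw [hA, ← mul_assoc, u.mul_inv, one_mul]
  have h1 : A - δ * h * A = δ := by
    have t := huA
    rw [hu, sub_mul, one_mul] at t
    exact t
  have hAv : A * (1 - h * δ) = δ := by
    have e : δ * (1 - h * δ) = (1 - δ * h) * δ := by noncomm_ring
    rw [hA, mul_assoc, e, ← hu, ← mul_assoc, u.inv_mul, one_mul]
  have hv : (1 - h * δ) * (1 + h * A) = 1 := by
    calc (1 - h * δ) * (1 + h * A)
        = 1 + h * (A - δ * h * A) - h * δ := by noncomm_ring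
      _ = 1 := by rw [h1]; noncomm_ring
  set X : Module.End R M := b * A + A * b + A * (1 + b * h + h * b) * A with hXdef
  have key : (u : Module.End R M) * X * (1 - h * δ) = 0 := by
    calc (u : Module.End R M) * X * (1 - h * δ)
        = (u : Module.End R M) * b * (A * (1 - h * δ))
          + ((u : Module.End R M) * A) * (b * (1 - h * δ))
          + ((u : Module.End R M) * A) * (1 + b * h + h * b) * (A * (1 - h * δ)) := by
          rw [hXdef]; noncomm_ring
      _ = (u : Module.End R M) * b * δ + δ * (b * (1 - h * δ))
          + δ * (1 + b * h + h * b) * δ := by rw [huA, hAv]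
      _ = b * δ + δ * b + δ * δ := by rw [hu]; noncomm_ring
      _ = 0 := hδb
  have k1 : (u : Module.End R M) * (X * (1 - h * δ)) = 0 := by
    rw [← mul_assoc]; exact key
  have k2 : X * (1 - h * δ) = 0 := by
    have := congrArg (fun z => (↑u⁻¹ : Module.End R M) * z) k1
    simpa [← mul_assoc, u.inv_mul] using this
  have hX : X = 0 := by
    calc X = X * ((1 - h * δ) * (1 + h * A)) := by rw [hv, mul_one]
      _ = (X * (1 - h * δ)) * (1 + h * A) := by rw [mul_assoc]
      _ = 0 := by rw [k2, zero_mul]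
  -- the End-level identity
  have hEF : b + (1 + b * h + h * b) * A + h * (A * b) + h * (A * (1 + b * h + h * b) * A)
      = (b + δ) * (1 + h * A) := by
    have e : b + (1 + b * h + h * b) * A + h * (A * b) + h * (A * (1 + b * h + h * b) * A)
        - (b + δ) * (1 + h * A) = h * X + (A - δ * h * A - δ) := by
      rw [hXdef]; noncomm_ring
    have e2 : b + (1 + b * h + h * b) * A + h * (A * b) + h * (A * (1 + b * h + h * b) * A)
        - (b + δ) * (1 + h * A) = 0 := by
      rw [e, hX, mul_zero, h1, sub_self, add_zero]
    exact sub_eq_zero.mp e2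
  -- conclude at the level of maps, pointwise
  rw [hi₁, hb₁]
  ext x
  have hix : i (bL x) = b (i x) := LinearMap.congr_fun hi x
  have hip' : ∀ y, i (p y) = y + b (h y) + h (b y) := fun y => by
    simpa using LinearMap.congr_fun hip y
  have hE := LinearMap.congr_fun hEF (i x)
  simp only [LinearMap.add_apply, LinearMap.comp_apply, Module.End.mul_apply,
    Module.End.one_apply, map_add, hix, hip'] at hE ⊢
  abel_nf at hE ⊢
  exact hE
end

section
/- Under the hypotheses of a homotopy equivalence data with a small perturbation δ, the map p₁ = p + p ∘ A ∘ h is a chain map from (M, b + δ) to (L, b₁), i.e. b₁ ∘ p₁ = p₁ ∘ (b + δ). -/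
/-- Main perturbation lemma: `p₁ = p + p ∘ A ∘ h` is a chain map from `(M, b + δ)`
to `(L, b₁)`, i.e. `b₁ ∘ p₁ = p₁ ∘ (b + δ)`. -/
theorem perturbed_p_is_chain_map {R L M : Type*} [CommRing R]
    [AddCommGroup L] [Module R L] [AddCommGroup M] [Module R M]
    (b h δ : Module.End R M) (bL : Module.End R L)
    (i : L →ₗ[R] M) (p : M →ₗ[R] L)
    (hbL : bL * bL = 0) (hb : b * b = 0)
    (hip : (i ∘ₗ p : Module.End R M) = 1 + b * h + h * b)
    (hi : i ∘ₗ bL = b ∘ₗ i) (hp : bL ∘ₗ p = p ∘ₗ b)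
    (hδ : (b + δ) * (b + δ) = 0)
    (u : (Module.End R M)ˣ) (hu : (u : Module.End R M) = 1 - δ * h)
    (A : Module.End R M) (hA : A = (↑u⁻¹ : Module.End R M) * δ)
    (b₁ : Module.End R L) (hb₁ : b₁ = bL + p ∘ₗ A ∘ₗ i)
    (p₁ : M →ₗ[R] L) (hp₁ : p₁ = p + p ∘ₗ A ∘ₗ h) :
    b₁ ∘ₗ p₁ = p₁ ∘ₗ (b + δ) := by
  -- basic ring identities in End R M
  have hδ' : b*δ + δ*b + δ*δ = 0 := by
    have h1 : b*b + (b*δ + δ*b + δ*δ) = 0 := by rw [← hδ]; noncomm_ring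
    rwa [hb, zero_add] at h1
  have huA : (↑u : Module.End R M) * A = δ := by
    rw [hA, ← mul_assoc, u.mul_inv, one_mul]
  have hAw : A * (1 - h*δ) = δ := by
    have e : δ * (1 - h*δ) = ↑u * δ := by rw [hu]; noncomm_ring
    rw [hA, mul_assoc, e, ← mul_assoc, u.inv_mul, one_mul]
  have h3 : δ*h*A = A - δ := by
    have t : (1 : Module.End R M) * A - δ*h*A = δ := by
      have : ((1 : Module.End R M) - δ*h) * A = δ := by rw [← hu]; exact huA
      rw [sub_mul] at this; exact this
    rw [one_mul] at t
    conv_rhs => rw [← t]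
    abel
  have h4 : A*h*δ = A - δ := by
    have t : A * 1 - A*(h*δ) = δ := by
      have := hAw; rw [mul_sub] at this; exact this
    rw [mul_one, ← mul_assoc] at t
    conv_rhs => rw [← t]
    abel
  have hwinv : ((1 : Module.End R M) - h*δ)*(1+h*A) = 1 := by
    have e : ((1 : Module.End R M) - h*δ)*(1+h*A) = 1 + h*A - h*δ - h*(δ*h*A) := by
      noncomm_ring
    rw [e, h3]; noncomm_ring
  -- the key vanishing element
  have hX : b*A + A*b + A*A + A*b*h*A + A*h*b*A = 0 := by
    have e1 : (↑u : Module.End R M) * (b*A + A*b + A*A + A*b*h*A + A*h*b*A) * (1 - h*δ)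
        = (↑u*b)*(A*(1-h*δ)) + (↑u*A)*(b*(1-h*δ)) + (↑u*A)*(A*(1-h*δ))
          + (↑u*A)*(b*(h*(A*(1-h*δ)))) + (↑u*A)*(h*(b*(A*(1-h*δ)))) := by
      noncomm_ring
    rw [huA, hAw] at e1
    have e2 : (↑u : Module.End R M)*b*δ + δ*(b*(1-h*δ)) + δ*δ + δ*(b*(h*δ)) + δ*(h*(b*δ))
        = b*δ + δ*b + δ*δ := by rw [hu]; noncomm_ring
    have e3 : (↑u : Module.End R M) * (b*A + A*b + A*A + A*b*h*A + A*h*b*A) * (1 - h*δ) = 0 := by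
      rw [e1, e2, hδ']
    have e4 : (b*A + A*b + A*A + A*b*h*A + A*h*b*A) * (1 - h*δ) = 0 := by
      have e5 := congrArg (fun z => (↑u⁻¹ : Module.End R M) * z) e3
      simpa [← mul_assoc, u.inv_mul] using e5
    calc b*A + A*b + A*A + A*b*h*A + A*h*b*A
        = (b*A + A*b + A*A + A*b*h*A + A*h*b*A) * ((1 - h*δ)*(1+h*A)) := by
          rw [hwinv, mul_one]
      _ = ((b*A + A*b + A*A + A*b*h*A + A*h*b*A) * (1 - h*δ)) * (1+h*A) :=
          (mul_assoc _ _ _).symm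
      _ = 0 := by rw [e4, zero_mul]
  -- key identity in End R M
  have key : b + b*A*h + A*(1+b*h+h*b) + A*(1+b*h+h*b)*(A*h)
      = (b+δ) + (A*h)*(b+δ) := by
    have e : b + b*A*h + A*(1+b*h+h*b) + A*(1+b*h+h*b)*(A*h)
        = ((b+δ) + (A*h)*(b+δ)) + (b*A + A*b + A*A + A*b*h*A + A*h*b*A)*h
          + (A - δ - A*h*δ) := by noncomm_ring
    rw [e, hX, zero_mul, h4]; abel
  -- pointwise finish
  have hp' : ∀ y, bL (p y) = p (b y) := fun y => LinearMap.congr_fun hp y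
  have hip' : ∀ y, i (p y) = y + b (h y) + h (b y) := fun y => by
    simpa using LinearMap.congr_fun hip y
  rw [hb₁, hp₁]
  ext x
  have k := LinearMap.congr_fun key x
  simp only [Module.End.mul_apply, LinearMap.add_apply, Module.End.one_apply, map_add] at k
  have k2 := congrArg p k
  simp only [map_add] at k2
  simp only [LinearMap.add_apply, LinearMap.comp_apply, LinearMap.add_comp, map_add, hp', hip']
  abel_nf at k2 ⊢
  -- hope k2 matches goal
  exact k2
end

section
/- Under the hypotheses of a homotopy equivalence data with a small perturbation δ, with i₁ = i + hAi, p₁ = p + pAh, h₁ = h + hAh, one has i₁ ∘ p₁ = 1 + h₁ ∘ (b + δ) + (b + δ) ∘ h₁. -/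
/-- Main perturbation lemma: `h₁ = h + h∘A∘h` is a homotopy between `i₁ ∘ p₁` and `1`:
`i₁ ∘ p₁ = 1 + h₁ ∘ (b + δ) + (b + δ) ∘ h₁`. -/
theorem perturbed_homotopy {R L M : Type*} [CommRing R]
    [AddCommGroup L] [Module R L] [AddCommGroup M] [Module R M]
    (b h δ : Module.End R M) (bL : Module.End R L)
    (i : L →ₗ[R] M) (p : M →ₗ[R] L)
    (hbL : bL * bL = 0) (hb : b * b = 0)
    (hip : (i ∘ₗ p : Module.End R M) = 1 + b * h + h * b)
    (hi : i ∘ₗ bL = b ∘ₗ i) (hp : bL ∘ₗ p = p ∘ₗ b)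
    (hδ : (b + δ) * (b + δ) = 0)
    (u : (Module.End R M)ˣ) (hu : (u : Module.End R M) = 1 - δ * h)
    (A : Module.End R M) (hA : A = (↑u⁻¹ : Module.End R M) * δ)
    (i₁ : L →ₗ[R] M) (hi₁ : i₁ = i + h ∘ₗ A ∘ₗ i)
    (p₁ : M →ₗ[R] L) (hp₁ : p₁ = p + p ∘ₗ A ∘ₗ h)
    (h₁ : Module.End R M) (hh₁ : h₁ = h + h * A * h) :
    (i₁ ∘ₗ p₁ : Module.End R M) = 1 + h₁ * (b + δ) + (b + δ) * h₁ := by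
  -- basic relations for A
  have e1 : (1 - δ * h) * A = δ := by
    rw [hA, ← hu]; exact u.mul_inv_cancel_left δ
  have e2 : A * (1 - h * δ) = δ := by
    have hcomm : δ * (1 - h * δ) = (1 - δ * h) * δ := by noncomm_ring
    rw [hA, mul_assoc, hcomm, ← hu, u.inv_mul_cancel_left]
  have c3 : δ * b + b * δ + δ * δ = 0 := by
    have : δ * b + b * δ + δ * δ = (b + δ) * (b + δ) - b * b := by noncomm_ring
    rw [this, hδ, hb, sub_zero]
  -- the key vanishing element
  set E : Module.End R M := A * b + b * A + A * (1 + b * h + h * b) * A with hE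
  have key : (1 - δ * h) * E * (1 - h * δ) = 0 := by
    have expand : (1 - δ * h) * E * (1 - h * δ) =
        ((1 - δ * h) * A) * (b * (1 - h * δ)) + ((1 - δ * h) * b) * (A * (1 - h * δ)) +
          ((1 - δ * h) * A) * (1 + b * h + h * b) * (A * (1 - h * δ)) := by
      rw [hE]; noncomm_ring
    rw [expand, e1, e2]
    have : δ * (b * (1 - h * δ)) + (1 - δ * h) * b * δ + δ * (1 + b * h + h * b) * δ =
        δ * b + b * δ + δ * δ := by noncomm_ring
    rw [this, c3]
  have hEv : E * (1 - h * δ) = 0 := by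
    have : (↑u : Module.End R M) * (E * (1 - h * δ)) = 0 := by
      rw [hu, ← mul_assoc]; exact key
    have := congrArg (fun x => (↑u⁻¹ : Module.End R M) * x) this
    simpa [u.inv_mul_cancel_left] using this
  -- v = 1 - h*δ is invertible with inverse 1 + h*A
  have hv1 : (1 - h * δ) * (1 + h * A) = 1 := by
    have : (1 - h * δ) * (1 + h * A) = 1 + h * (A - δ - δ * (h * A)) := by noncomm_ring
    rw [this]
    have : A - δ - δ * (h * A) = ((1 - δ * h) * A) - δ := by noncomm_ring
    rw [this, e1, sub_self, mul_zero, add_zero]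
  have hE0 : E = 0 := by
    have := congrArg (fun x => x * (1 + h * A)) hEv
    simpa [mul_assoc, hv1] using this
  -- expand i₁ ∘ p₁ in terms of P = i ∘ p
  have comp_eq : (i₁ ∘ₗ p₁ : Module.End R M) =
      (i ∘ₗ p : Module.End R M) + h * A * (i ∘ₗ p : Module.End R M) +
        (i ∘ₗ p : Module.End R M) * (A * h) +
        h * A * ((i ∘ₗ p : Module.End R M) * (A * h)) := by
    ext x
    simp only [hi₁, hp₁, LinearMap.add_comp, LinearMap.comp_add, LinearMap.add_apply,
      Module.End.mul_apply, LinearMap.comp_apply, map_add]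
    abel
  rw [comp_eq, hip, hh₁]
  -- reduce to the algebraic identity
  have rel1 : A - δ - δ * h * A = 0 := by
    have : A - δ - δ * h * A = (1 - δ * h) * A - δ := by noncomm_ring
    rw [this, e1, sub_self]
  have rel2 : A - δ - A * h * δ = 0 := by
    have : A - δ - A * h * δ = A * (1 - h * δ) - δ := by noncomm_ring
    rw [this, e2, sub_self]
  have main : (1 + b * h + h * b) + h * A * (1 + b * h + h * b) +
        (1 + b * h + h * b) * (A * h) + h * A * ((1 + b * h + h * b) * (A * h)) -
        (1 + (h + h * A * h) * (b + δ) + (b + δ) * (h + h * A * h)) =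
      h * (A - δ - A * h * δ) + (A - δ - δ * h * A) * h + h * E * h := by
    rw [hE]; noncomm_ring
  rw [rel1, rel2, hE0] at main
  simp only [mul_zero, zero_mul, add_zero, zero_add] at main
  exact sub_eq_zero.mp main
end

section
/- If (M, b) is a contractible complex with contraction h satisfying h∘b + b∘h + 1 = 0, and δ is a perturbation with (b + δ)² = 0 such that (1 - δ∘h) is invertible, then H = h ∘ (1 - δ∘h)⁻¹ satisfies H ∘ (b + δ) + (b + δ) ∘ H + 1 = 0; in particular (M, b + δ) is contractible. -/
/-- Auxiliary purely ring-theoretic version of the perturbation lemma. -/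
theorem perturbing_contractions_ring {A : Type*} [Ring A] (b h δ v : A)
    (hb : b * b = 0) (hc : h * b + b * h + 1 = 0)
    (hd : (b + δ) * (b + δ) = 0)
    (h1 : (1 - δ * h) * v = 1) (h2 : v * (1 - δ * h) = 1) :
    (h * v) * (b + δ) + (b + δ) * (h * v) + 1 = 0 := by
  -- v * δ * h = v - 1 and δ * h * v = v - 1
  have hvδh : v * (δ * h) = v - 1 := by
    linear_combination (norm := noncomm_ring) -h2
  have hδhv : δ * h * v = v - 1 := by
    linear_combination (norm := noncomm_ring) -h1
  -- w = 1 + h*v*δ is a two-sided inverse of 1 - h*δ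
  have hw1 : (1 + h * v * δ) * (1 - h * δ) = 1 := by
    linear_combination (norm := noncomm_ring) -(h * hvδh * δ)
  -- the conjugated expression vanishes
  have key0 : (1 - h * δ) * ((h * v) * (b + δ) + (b + δ) * (h * v) + 1) * (1 - δ * h) = 0 := by
    linear_combination (norm := noncomm_ring)
      h * h1 * ((b + δ) * (1 - δ * h)) + ((1 - h * δ) * (b + δ) * h) * h2 + hc
        - h * hd * h + h * hb * h
  have expand : ∀ x : A, x = (1 + h * v * δ) * ((1 - h * δ) * x * (1 - δ * h)) * v := by
    intro x
    rw [show (1 + h * v * δ) * ((1 - h * δ) * x * (1 - δ * h)) * v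
        = ((1 + h * v * δ) * (1 - h * δ)) * x * ((1 - δ * h) * v) by noncomm_ring,
      hw1, h1, one_mul, mul_one]
  rw [expand ((h * v) * (b + δ) + (b + δ) * (h * v) + 1), key0, mul_zero, zero_mul]

/-- Perturbing contractions: if `h∘b + b∘h + 1 = 0`, `(b+δ)² = 0` and `(1 - δ∘h)`
is invertible, then `H = h ∘ (1 - δ∘h)⁻¹` is a contraction for `b + δ`:
`H ∘ (b+δ) + (b+δ) ∘ H + 1 = 0`. -/
theorem perturbing_contractions {R M : Type*} [CommRing R] [AddCommGroup M] [Module R M]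
    (b h δ : Module.End R M)
    (hb : b * b = 0) (hcontr : h * b + b * h + 1 = 0)
    (hδ : (b + δ) * (b + δ) = 0)
    (u : (Module.End R M)ˣ) (hu : (u : Module.End R M) = 1 - δ * h)
    (H : Module.End R M) (hH : H = h * (↑u⁻¹ : Module.End R M)) :
    H * (b + δ) + (b + δ) * H + 1 = 0 := by
  have h1 : (1 - δ * h) * (↑u⁻¹ : Module.End R M) = 1 := by rw [← hu]; exact u.mul_inv
  have h2 : (↑u⁻¹ : Module.End R M) * (1 - δ * h) = 1 := by rw [← hu]; exact u.inv_mul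
  rw [hH]
  exact perturbing_contractions_ring b h δ _ hb hcontr hδ h1 h2
end

section
/- Killing contractible complexes: given a chain complex on A ⊕ A' with differential d = [[α, β],[γ, δ]] such that d² = 0, and H : A' → A' with H∘δ + δ∘H = 1 and H∘H = 0 (or just H a contracting homotopy of (A', δ)), the map D = α - β ∘ H ∘ γ on A satisfies D ∘ D = 0. -/
/-- Killing contractible complexes: if the block differential `d = [[α,β],[γ,δ]]`
on `A ⊕ A'` squares to zero, `(A', δ)` is a complex (`δ² = 0`) contracted by `H`
(`H∘δ + δ∘H = 1`), then `D = α - β∘H∘γ` satisfies `D ∘ D = 0`. -/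
theorem killing_contractible_differential {R A A' : Type*} [CommRing R]
    [AddCommGroup A] [Module R A] [AddCommGroup A'] [Module R A']
    (α : Module.End R A) (β : A' →ₗ[R] A) (γ : A →ₗ[R] A') (δ : Module.End R A')
    (h1 : α * α + β ∘ₗ γ = 0)
    (h2 : α ∘ₗ β + β ∘ₗ δ = 0)
    (h3 : γ ∘ₗ α + δ ∘ₗ γ = 0)
    (h4 : (γ ∘ₗ β : Module.End R A') + δ * δ = 0)
    (hδ : δ * δ = 0)
    (H : Module.End R A') (hH : H * δ + δ * H = 1) :
    (α - β ∘ₗ H ∘ₗ γ) * (α - β ∘ₗ H ∘ₗ γ) = 0 := by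
  have hγβ : (γ ∘ₗ β : Module.End R A') = 0 := by
    rwa [hδ, add_zero] at h4
  ext x
  have e1 := congrArg (fun f => f x) h1
  have e2 := congrArg (fun f => f ((H ∘ₗ γ) x)) h2
  have e3 := congrArg (fun f => (β ∘ₗ H) (f x)) h3
  have e4 := congrArg (fun f => (β ∘ₗ H) (f ((H ∘ₗ γ) x))) hγβ
  have e5 := congrArg (fun f => β (f (γ x))) hH
  simp only [Module.End.mul_apply, LinearMap.comp_apply, LinearMap.add_apply,
    LinearMap.zero_apply, Module.End.one_apply, map_add, map_neg, map_zero] at e1 e2 e3 e4 e5 ⊢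
  simp only [LinearMap.sub_apply, Module.End.mul_apply, LinearMap.comp_apply, map_sub,
    LinearMap.zero_apply]
  rw [eq_neg_of_add_eq_zero_left e1, eq_neg_of_add_eq_zero_left e2,
    eq_neg_of_add_eq_zero_left e3, e4, ← e5]
  abel
end

section
/- If δ is a small perturbation of a homotopy equivalence data in which p ∘ i = 1 (a deformation retract), then the perturbed maps satisfy p₁ ∘ i₁ = 1 if and only if p ∘ (A∘h²∘A + A∘h + h∘A) ∘ i = 0. -/
/-- Perturbing deformation retracts: with `p ∘ i = 1`, the perturbed maps satisfy
`p₁ ∘ i₁ = 1` if and only if `p ∘ (A∘h²∘A + A∘h + h∘A) ∘ i = 0`. -/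
theorem perturbing_DR_iff {R L M : Type*} [CommRing R]
    [AddCommGroup L] [Module R L] [AddCommGroup M] [Module R M]
    (b h δ : Module.End R M) (bL : Module.End R L)
    (i : L →ₗ[R] M) (p : M →ₗ[R] L)
    (hbL : bL * bL = 0) (hb : b * b = 0)
    (hip : (i ∘ₗ p : Module.End R M) = 1 + b * h + h * b)
    (hpi : (p ∘ₗ i : Module.End R L) = 1)
    (hi : i ∘ₗ bL = b ∘ₗ i) (hp : bL ∘ₗ p = p ∘ₗ b)
    (hδ : (b + δ) * (b + δ) = 0)
    (u : (Module.End R M)ˣ) (hu : (u : Module.End R M) = 1 - δ * h)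
    (A : Module.End R M) (hA : A = (↑u⁻¹ : Module.End R M) * δ)
    (i₁ : L →ₗ[R] M) (hi₁ : i₁ = i + h ∘ₗ A ∘ₗ i)
    (p₁ : M →ₗ[R] L) (hp₁ : p₁ = p + p ∘ₗ A ∘ₗ h) :
    (p₁ ∘ₗ i₁ : Module.End R L) = 1 ↔
      p ∘ₗ (A * h * h * A + A * h + h * A) ∘ₗ i = 0 := by
  have key : (p₁ ∘ₗ i₁ : Module.End R L)
      = 1 + p ∘ₗ (A * h * h * A + A * h + h * A) ∘ₗ i := by
    subst hi₁ hp₁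
    ext x
    simp only [LinearMap.comp_apply, LinearMap.add_apply, Module.End.mul_apply,
      Module.End.one_apply, map_add]
    have := congrArg (fun f : Module.End R L => f x) hpi
    simp only [LinearMap.comp_apply, Module.End.one_apply] at this
    rw [this]
    abel
  rw [key]
  exact add_eq_left
end

section
/- If the initial data is a special deformation retract (p∘i = 1, h∘i = 0, p∘h = 0, h∘h = 0) and δ is a small perturbation, then the perturbed data is again a special deformation retract: p₁∘i₁ = 1, h₁∘i₁ = 0, p₁∘h₁ = 0, h₁∘h₁ = 0. -/
/-- Perturbing special deformation retracts: if `p∘i = 1`, `h∘i = 0`, `p∘h = 0`,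
`h∘h = 0` and `δ` is a small perturbation, then the perturbed data is again a
special deformation retract. -/
theorem perturbing_special_DR {R L M : Type*} [CommRing R]
    [AddCommGroup L] [Module R L] [AddCommGroup M] [Module R M]
    (b h δ : Module.End R M) (bL : Module.End R L)
    (i : L →ₗ[R] M) (p : M →ₗ[R] L)
    (hbL : bL * bL = 0) (hb : b * b = 0)
    (hip : (i ∘ₗ p : Module.End R M) = 1 + b * h + h * b)
    (hpi : (p ∘ₗ i : Module.End R L) = 1)
    (hchain_i : i ∘ₗ bL = b ∘ₗ i) (hchain_p : bL ∘ₗ p = p ∘ₗ b)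
    (hhi : h ∘ₗ i = 0) (hph : p ∘ₗ h = 0) (hhh : h * h = 0)
    (hδ : (b + δ) * (b + δ) = 0)
    (u : (Module.End R M)ˣ) (hu : (u : Module.End R M) = 1 - δ * h)
    (A : Module.End R M) (hA : A = (↑u⁻¹ : Module.End R M) * δ)
    (i₁ : L →ₗ[R] M) (hi₁ : i₁ = i + h ∘ₗ A ∘ₗ i)
    (p₁ : M →ₗ[R] L) (hp₁ : p₁ = p + p ∘ₗ A ∘ₗ h)
    (h₁ : Module.End R M) (hh₁ : h₁ = h + h * A * h) :
    (p₁ ∘ₗ i₁ : Module.End R L) = 1 ∧ h₁ ∘ₗ i₁ = 0 ∧ p₁ ∘ₗ h₁ = 0 ∧ h₁ * h₁ = 0 := by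
  subst hi₁ hp₁ hh₁
  have hhi' : ∀ x, h (i x) = 0 := fun x => congrFun (congrArg DFunLike.coe hhi) x
  have hph' : ∀ x, p (h x) = 0 := fun x => congrFun (congrArg DFunLike.coe hph) x
  have hhh' : ∀ x, h (h x) = 0 := fun x => congrFun (congrArg DFunLike.coe hhh) x
  have hpi' : ∀ x, p (i x) = x := fun x => congrFun (congrArg DFunLike.coe hpi) x
  refine ⟨?_, ?_, ?_, ?_⟩ <;> ext x <;>
    simp [LinearMap.comp_apply, LinearMap.add_apply, Module.End.mul_apply,
      hhi', hph', hhh', hpi']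
end

section
/- Let (C, b) be a cochain complex of normed spaces with a contraction h in degree k (bh + hb + 1 = 0 on C^k) where h is bounded linear, and let δ be a perturbation ((b+δ)² = 0) such that the operator norm of δ∘h on C^k and C^{k+1} is strictly less than 1. Then H = h ∘ (1 - δ∘h)⁻¹ (defined via the geometric series) satisfies (b+δ)H + H(b+δ) + 1 = 0 on C^k, hence H^k(C, b+δ) = 0. -/
/-- Perturbing a contraction in degree `k` of a complex of Banach spaces: if
`b∘h + h∘b + 1 = 0` on `C^k` and `‖δ∘h‖ < 1` on `C^k` and `C^{k+1}`, then
`H = h ∘ (1 - δ∘h)⁻¹` is a contraction in degree `k` for `b + δ`; in particular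
the cohomology of `(C, b+δ)` in degree `k` vanishes. Here `C0 = C^{k-1}`,
`C1 = C^k`, `C2 = C^{k+1}`. -/
theorem banach_perturbed_contraction
    {C0 C1 C2 : Type*}
    [NormedAddCommGroup C0] [NormedSpace ℝ C0] [CompleteSpace C0]
    [NormedAddCommGroup C1] [NormedSpace ℝ C1] [CompleteSpace C1]
    [NormedAddCommGroup C2] [NormedSpace ℝ C2] [CompleteSpace C2]
    (b01 : C0 →L[ℝ] C1) (b12 : C1 →L[ℝ] C2)
    (δ01 : C0 →L[ℝ] C1) (δ12 : C1 →L[ℝ] C2)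
    (h10 : C1 →L[ℝ] C0) (h21 : C2 →L[ℝ] C1)
    (hbb : b12.comp b01 = 0)
    (hδδ : (b12 + δ12).comp (b01 + δ01) = 0)
    (hcontr : b01.comp h10 + h21.comp b12 + 1 = 0)
    (hsmall1 : ‖δ01.comp h10‖ < 1) (hsmall2 : ‖δ12.comp h21‖ < 1)
    (H10 : C1 →L[ℝ] C0) (hH10 : H10 = h10.comp (Ring.inverse (1 - δ01.comp h10)))
    (H21 : C2 →L[ℝ] C1) (hH21 : H21 = h21.comp (Ring.inverse (1 - δ12.comp h21))) :
    ((b01 + δ01).comp H10 + H21.comp (b12 + δ12) + 1 = 0) ∧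
    (∀ v : C1, (b12 + δ12) v = 0 → ∃ w : C0, (b01 + δ01) w = v) := by
  set A : C1 →L[ℝ] C1 := δ01.comp h10 with hA
  set B : C2 →L[ℝ] C2 := δ12.comp h21 with hB
  have hUA : IsUnit ((1 : C1 →L[ℝ] C1) - A) := ⟨Units.oneSub A hsmall1, rfl⟩
  have hUB : IsUnit ((1 : C2 →L[ℝ] C2) - B) := ⟨Units.oneSub B hsmall2, rfl⟩
  set X : C1 →L[ℝ] C1 := Ring.inverse ((1 : C1 →L[ℝ] C1) - A) with hX
  set Y : C2 →L[ℝ] C2 := Ring.inverse ((1 : C2 →L[ℝ] C2) - B) with hY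
  have hXA : X * ((1 : C1 →L[ℝ] C1) - A) = 1 := Ring.inverse_mul_cancel _ hUA
  have hAX : ((1 : C1 →L[ℝ] C1) - A) * X = 1 := Ring.mul_inverse_cancel _ hUA
  have hYB : Y * ((1 : C2 →L[ℝ] C2) - B) = 1 := Ring.inverse_mul_cancel _ hUB
  have hone1 : (1 : C1 →L[ℝ] C1) = ContinuousLinearMap.id ℝ C1 := rfl
  have hone2 : (1 : C2 →L[ℝ] C2) = ContinuousLinearMap.id ℝ C2 := rfl
  -- expansion of (b+δ)² = 0
  have h1 : (b12 + δ12).comp δ01 = -(δ12.comp b01) := by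
    have : (b12 + δ12).comp b01 + (b12 + δ12).comp δ01 = 0 := by
      rw [← ContinuousLinearMap.comp_add]; exact hδδ
    have h2 : (b12 + δ12).comp b01 = δ12.comp b01 := by
      rw [ContinuousLinearMap.add_comp, hbb, zero_add]
    rw [h2] at this
    linear_combination (norm := abel) this
  have hbh : b01.comp h10 = -(h21.comp b12) - 1 := by
    linear_combination (norm := abel) hcontr
  -- swap identity
  have hswap : (b12 + δ12).comp ((1 : C1 →L[ℝ] C1) - A) =
      ((1 : C2 →L[ℝ] C2) - B).comp b12 := by
    have e1 : (b12 + δ12).comp A = δ12 + B.comp b12 := by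
      calc (b12 + δ12).comp A = ((b12 + δ12).comp δ01).comp h10 := by
            rw [hA, ContinuousLinearMap.comp_assoc]
        _ = -(δ12.comp (b01.comp h10)) := by
            rw [h1, ContinuousLinearMap.neg_comp, ContinuousLinearMap.comp_assoc]
        _ = -(δ12.comp (-(h21.comp b12) - 1)) := by rw [hbh]
        _ = δ12 + B.comp b12 := by
            rw [ContinuousLinearMap.comp_sub, ContinuousLinearMap.comp_neg, hone1,
              ContinuousLinearMap.comp_id, hB, ← ContinuousLinearMap.comp_assoc]
            abel
    rw [ContinuousLinearMap.comp_sub, ContinuousLinearMap.sub_comp, hone1, hone2,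
      ContinuousLinearMap.comp_id, ContinuousLinearMap.id_comp, e1]
    abel
  set G : C1 →L[ℝ] C1 := (b01 + δ01).comp H10 + H21.comp (b12 + δ12) + 1 with hG
  have hG0 : G = 0 := by
    have key : G.comp ((1 : C1 →L[ℝ] C1) - A) = 0 := by
      have e2 : H10.comp ((1 : C1 →L[ℝ] C1) - A) = h10 := by
        rw [hH10, ContinuousLinearMap.comp_assoc,
          show X.comp ((1 : C1 →L[ℝ] C1) - A) = X * ((1 : C1 →L[ℝ] C1) - A) from rfl,
          hXA]
        exact ContinuousLinearMap.comp_id _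
      have e3 : (H21.comp (b12 + δ12)).comp ((1 : C1 →L[ℝ] C1) - A) = h21.comp b12 := by
        rw [ContinuousLinearMap.comp_assoc, hswap, hH21,
          ContinuousLinearMap.comp_assoc, ← ContinuousLinearMap.comp_assoc Y,
          show Y.comp ((1 : C2 →L[ℝ] C2) - B) = Y * ((1 : C2 →L[ℝ] C2) - B) from rfl,
          hYB, hone2, ContinuousLinearMap.id_comp]
      calc G.comp ((1 : C1 →L[ℝ] C1) - A)
          = ((b01 + δ01).comp H10).comp ((1 : C1 →L[ℝ] C1) - A)
            + (H21.comp (b12 + δ12)).comp ((1 : C1 →L[ℝ] C1) - A)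
            + ((1 : C1 →L[ℝ] C1) - A) := by
            rw [hG, ContinuousLinearMap.add_comp, ContinuousLinearMap.add_comp, hone1,
              ContinuousLinearMap.id_comp]
        _ = (b01 + δ01).comp h10 + h21.comp b12 + ((1 : C1 →L[ℝ] C1) - A) := by
            rw [ContinuousLinearMap.comp_assoc, e2, e3]
        _ = (b01.comp h10 + h21.comp b12 + 1) + (δ01.comp h10 - A) := by
            rw [ContinuousLinearMap.add_comp]; abel
        _ = 0 := by rw [hcontr, hA]; abel
    calc G = G.comp (((1 : C1 →L[ℝ] C1) - A) * X) := by
          rw [hAX]; exact (ContinuousLinearMap.comp_id _).symm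
      _ = (G.comp ((1 : C1 →L[ℝ] C1) - A)).comp X := by
          rw [show ((1 : C1 →L[ℝ] C1) - A) * X = ((1 : C1 →L[ℝ] C1) - A).comp X from rfl,
            ContinuousLinearMap.comp_assoc]
      _ = 0 := by rw [key, ContinuousLinearMap.zero_comp]
  constructor
  · exact hG0
  · intro v hv
    refine ⟨-(H10 v), ?_⟩
    have h := DFunLike.congr_fun hG0 v
    rw [hG] at h
    simp only [ContinuousLinearMap.add_apply, ContinuousLinearMap.comp_apply,
      ContinuousLinearMap.one_apply, ContinuousLinearMap.zero_apply, hv, map_zero,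
      add_zero, zero_add] at h
    rw [map_neg]
    exact neg_eq_of_add_eq_zero_right h
end
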